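/- Let (X,p) be a TVS-cone metric space over E with cone P and fix e ∈ int P. For every sequence (x_n) in X: (x_n) is cone-Cauchy if and only if (x_n) is Cauchy for d_p, i.e., for every ε > 0 there is N such that d_p(x_n, x_m) = ξ_e(p(x_n, x_m)) < ε for all n, m ≥ N. -/

import Mathlib

open Filter Topology

section Defs

variable {E : Type*} [AddCommGroup E] [Module ℝ E] [TopologicalSpace E]

/-- `P` is a closed, pointed convex cone with nonempty interior in the TVS `E`. -/
structure IsTVSCone (P : Set E) : Prop where
  add_mem : ∀ ⦃a⦄, a ∈ P → ∀ ⦃b⦄, b ∈ P → a + b ∈ P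
  smul_mem : ∀ (r : ℝ), 0 ≤ r → ∀ ⦃a⦄, a ∈ P → r • a ∈ P
  pointed : ∀ a, a ∈ P → -a ∈ P → a = 0
  isClosed : IsClosed P
  int_nonempty : (interior P).Nonempty

/-- `a ≤ b` with respect to the cone `P`. -/
def ConeLe (P : Set E) (a b : E) : Prop := b - a ∈ P

/-- `a ≪ b` with respect to the cone `P`. -/
def ConeLt (P : Set E) (a b : E) : Prop := b - a ∈ interior P

/-- `p : X × X → E` is a TVS-cone metric over the cone `P`. -/
structure IsConeMetric (P : Set E) {X : Type*} (p : X → X → E) : Prop where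
  nonneg : ∀ x y, ConeLe P 0 (p x y)
  eq_zero_iff : ∀ x y, p x y = 0 ↔ x = y
  symm : ∀ x y, p x y = p y x
  triangle : ∀ x y z, ConeLe P (p x y) (p x z + p z y)

/-- The sequence `x` cone-converges to `a`. -/
def ConeConverges (P : Set E) {X : Type*} (p : X → X → E) (x : ℕ → X) (a : X) : Prop :=
  ∀ c, c ∈ interior P → ∃ N, ∀ n ≥ N, ConeLt P (p (x n) a) c

/-- The sequence `x` is cone-Cauchy. -/
def ConeCauchy (P : Set E) {X : Type*} (p : X → X → E) (x : ℕ → X) : Prop :=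
  ∀ c, c ∈ interior P → ∃ N, ∀ n ≥ N, ∀ m ≥ N, ConeLt P (p (x n) (x m)) c

/-- `(X, p)` is cone-complete. -/
def ConeComplete (P : Set E) {X : Type*} (p : X → X → E) : Prop :=
  ∀ x : ℕ → X, ConeCauchy P p x → ∃ a, ConeConverges P p x a

/-- The nonlinear scalarization ξ_e(y) = inf {t : t • e - y ∈ P}. -/
noncomputable def xiScal (P : Set E) (e y : E) : ℝ := sInf {t : ℝ | t • e - y ∈ P}

/-- The open ball `B(x, c) = {y : p x y ≪ c}`. -/
def coneBall (P : Set E) {X : Type*} (p : X → X → E) (x : X) (c : E) : Set X :=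
  {y | ConeLt P (p x y) c}

/-- The cone metric topology `τ_p`, generated by the balls `B(x,c)`, `c ≫ 0`. -/
def coneTopology (P : Set E) {X : Type*} (p : X → X → E) : TopologicalSpace X :=
  TopologicalSpace.generateFrom {s | ∃ x c, c ∈ interior P ∧ s = coneBall P p x c}

end Defs

set_option linter.unusedSectionVars false
set_option linter.unusedVariables false

section Aux
variable {E : Type*} [AddCommGroup E] [Module ℝ E] [TopologicalSpace E]
    [IsTopologicalAddGroup E] [ContinuousSMul ℝ E]

lemma aux_smul_int (P : Set E) (hP : IsTVSCone P)
    {ε : ℝ} (hε : 0 < ε) {a : E} (ha : a ∈ interior P) : ε • a ∈ interior P := by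
  have hmap : IsOpenMap fun x : E => ε • x := isOpenMap_smul₀ hε.ne'
  have hsub : (fun x : E => ε • x) '' interior P ⊆ P := by
    rintro _ ⟨u, hu, rfl⟩; exact hP.smul_mem ε hε.le (interior_subset hu)
  exact interior_maximal hsub (hmap _ isOpen_interior) ⟨a, ha, rfl⟩

lemma aux_int_add (P : Set E) (hP : IsTVSCone P)
    {a b : E} (ha : a ∈ interior P) (hb : b ∈ P) : a + b ∈ interior P := by
  have hmap : IsOpenMap fun u : E => u + b := isOpenMap_add_right b
  have hsub : (fun u : E => u + b) '' interior P ⊆ P := by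
    rintro _ ⟨u, hu, rfl⟩; exact hP.add_mem (interior_subset hu) hb
  exact interior_maximal hsub (hmap _ isOpen_interior) ⟨a, ha, rfl⟩

lemma aux_sub_smul (P : Set E) {e z : E} (hz : z ∈ interior P) :
    ∃ δ > (0:ℝ), z - δ • e ∈ interior P := by
  have hc : Continuous fun t : ℝ => z - t • e := by continuity
  have h0 : (0:ℝ) ∈ (fun t : ℝ => z - t • e) ⁻¹' interior P := by
    simp only [Set.mem_preimage, zero_smul, sub_zero]; exact hz
  have h : (fun t : ℝ => z - t • e) ⁻¹' interior P ∈ 𝓝 (0:ℝ) :=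
    (isOpen_interior.preimage hc).mem_nhds h0
  obtain ⟨r, hr, hball⟩ := Metric.mem_nhds_iff.1 h
  have hd : dist (r/2) (0:ℝ) < r := by
    rw [Real.dist_eq, sub_zero, abs_of_pos (by positivity)]; linarith
  exact ⟨r/2, by positivity, hball hd⟩

lemma aux_nonempty (P : Set E) (hP : IsTVSCone P)
    {e : E} (he : e ∈ interior P) (y : E) : ∃ t : ℝ, t • e - y ∈ P := by
  have hc : Continuous fun s : ℝ => e - s • y := by continuity
  have h0 : (0:ℝ) ∈ (fun s : ℝ => e - s • y) ⁻¹' interior P := by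
    simp only [Set.mem_preimage, zero_smul, sub_zero]; exact he
  have h : (fun s : ℝ => e - s • y) ⁻¹' interior P ∈ 𝓝 (0:ℝ) :=
    (isOpen_interior.preimage hc).mem_nhds h0
  obtain ⟨r, hr, hball⟩ := Metric.mem_nhds_iff.1 h
  have hd : dist (r/2) (0:ℝ) < r := by
    rw [Real.dist_eq, sub_zero, abs_of_pos (by positivity)]; linarith
  have hmem : e - (r/2) • y ∈ interior P := hball hd
  refine ⟨(r/2)⁻¹, ?_⟩
  have h1 : (r/2)⁻¹ • (e - (r/2) • y) ∈ P :=
    hP.smul_mem _ (by positivity) (interior_subset hmem)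
  have heq : (r/2)⁻¹ • (e - (r/2) • y) = (r/2)⁻¹ • e - y := by
    rw [smul_sub, smul_smul, inv_mul_cancel₀ (by positivity), one_smul]
  rwa [heq] at h1

/-- If `t • e - y ∈ interior P` with `0 < t` then `xiScal P e y < t`. -/
lemma aux_xi_lt (P : Set E) (hP : IsTVSCone P) {e y : E} {t : ℝ} (ht : 0 < t)
    (h : t • e - y ∈ interior P) : xiScal P e y < t := by
  obtain ⟨δ, hδ, hmem⟩ := aux_sub_smul P h
  have hset : t - δ ∈ {s : ℝ | s • e - y ∈ P} := by
    have heq : t • e - y - δ • e = (t - δ) • e - y := by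
      rw [sub_smul]; abel
    rw [Set.mem_setOf_eq, ← heq]; exact interior_subset hmem
  by_cases hbdd : BddBelow {s : ℝ | s • e - y ∈ P}
  · calc xiScal P e y ≤ t - δ := csInf_le hbdd hset
      _ < t := by linarith
  · rw [xiScal, Real.sInf_of_not_bddBelow hbdd]; exact ht

/-- If `xiScal P e y < t` then some `s < t` has `s • e - y ∈ P`. -/
lemma aux_lt_xi (P : Set E) (hP : IsTVSCone P) {e : E} (he : e ∈ interior P) {y : E} {t : ℝ}
    (h : xiScal P e y < t) : ∃ s < t, s • e - y ∈ P := by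
  by_cases hbdd : BddBelow {s : ℝ | s • e - y ∈ P}
  · have hne : {s : ℝ | s • e - y ∈ P}.Nonempty := aux_nonempty P hP he y
    obtain ⟨s, hs, hst⟩ := (csInf_lt_iff hbdd hne).1 h
    exact ⟨s, hst, hs⟩
  · obtain ⟨s, hs, hst⟩ := not_bddBelow_iff.1 hbdd t
    exact ⟨s, hst, hs⟩

end Aux

/-- `x_n` is cone-Cauchy iff it is Cauchy for `d_p = ξ_e ∘ p`. -/
theorem stmt_6 {E X : Type*} [AddCommGroup E] [Module ℝ E] [TopologicalSpace E]
    [IsTopologicalAddGroup E] [ContinuousSMul ℝ E] [T2Space E] [Nonempty X]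
    (P : Set E) (hP : IsTVSCone P) (p : X → X → E) (hp : IsConeMetric P p)
    (e : E) (he : e ∈ interior P) (x : ℕ → X) :
    ConeCauchy P p x ↔
      ∀ ε : ℝ, 0 < ε → ∃ N, ∀ n ≥ N, ∀ m ≥ N, xiScal P e (p (x n) (x m)) < ε := by
  constructor
  · intro hcauchy ε hε
    have hc : ε • e ∈ interior P := aux_smul_int P hP hε he
    obtain ⟨N, hN⟩ := hcauchy (ε • e) hc
    exact ⟨N, fun n hn m hm => aux_xi_lt P hP hε (hN n hn m hm)⟩
  · intro hcauchy c hc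
    obtain ⟨δ, hδ, hmem⟩ := aux_sub_smul P (e := e) hc
    obtain ⟨N, hN⟩ := hcauchy δ hδ
    refine ⟨N, fun n hn m hm => ?_⟩
    obtain ⟨s, hst, hs⟩ := aux_lt_xi P hP he (hN n hn m hm)
    have h1 : (δ - s) • e ∈ P := hP.smul_mem _ (by linarith) (interior_subset he)
    have h2 : (δ - s) • e + (s • e - p (x n) (x m)) ∈ P := hP.add_mem h1 hs
    have h3 : (c - δ • e) + ((δ - s) • e + (s • e - p (x n) (x m))) ∈ interior P :=
      aux_int_add P hP hmem h2
    have heq : (c - δ • e) + ((δ - s) • e + (s • e - p (x n) (x m)))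
        = c - p (x n) (x m) := by
      rw [sub_smul]; abel
    rw [heq] at h3
    exact h3
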